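/- arXiv:1812.04425 — 3 statements merged into one kernel-verified Lean document; each statement's English description precedes it below -/
import Mathlib

section
/- Let R = ⨁_{d≥0} R_d be a nonnegatively graded commutative ring such that R_0 is a local ring with maximal ideal 𝔪_0, and let 𝔪 ⊆ R be the ideal generated by 𝔪_0 together with all homogeneous elements of positive degree. Let M = ⨁_{d≥0} M_d and N = ⨁_{d≥0} N_d be nonnegatively graded R-modules such that each M_d and each N_d is a finitely generated R_0-module, and let f: M → N be a morphism of graded R-modules (R-linear with f(M_d) ⊆ N_d for all d). If the induced map M/𝔪M → N/𝔪N is surjective, then f is surjective. -/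
/-- Graded Nakayama lemma: let `R` be a nonnegatively graded commutative ring whose degree
zero part `𝒜 0` is a local ring, let `𝔪` be the ideal of `R` generated by the maximal ideal
of `𝒜 0` together with all homogeneous elements of positive degree, and let `f : M → N` be a
morphism of nonnegatively graded `R`-modules whose graded pieces are finitely generated over
`𝒜 0`.  If the induced map `M/𝔪M → N/𝔪N` is surjective, then `f` is surjective. -/
theorem graded_nakayama {R : Type*} [CommRing R]
    (𝒜 : ℕ → AddSubgroup R) [GradedRing 𝒜] [IsLocalRing ↥(𝒜 0)]
    {M N : Type*} [AddCommGroup M] [Module R M] [AddCommGroup N] [Module R N]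
    (ℳ : ℕ → AddSubgroup M) [DirectSum.Decomposition ℳ]
    (𝒩 : ℕ → AddSubgroup N) [DirectSum.Decomposition 𝒩]
    (hℳ : ∀ (i j : ℕ) (r : R) (m : M), r ∈ 𝒜 i → m ∈ ℳ j → r • m ∈ ℳ (i + j))
    (h𝒩 : ∀ (i j : ℕ) (r : R) (n : N), r ∈ 𝒜 i → n ∈ 𝒩 j → r • n ∈ 𝒩 (i + j))
    (hMfg : ∀ d : ℕ, ∃ s : Finset M, (↑s : Set M) ⊆ ℳ d ∧
      ∀ m ∈ ℳ d, ∃ c : M → R, (∀ x, c x ∈ 𝒜 0) ∧ m = ∑ x ∈ s, c x • x)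
    (hNfg : ∀ d : ℕ, ∃ s : Finset N, (↑s : Set N) ⊆ 𝒩 d ∧
      ∀ n ∈ 𝒩 d, ∃ c : N → R, (∀ x, c x ∈ 𝒜 0) ∧ n = ∑ x ∈ s, c x • x)
    (f : M →ₗ[R] N) (hf : ∀ (d : ℕ), ∀ m ∈ ℳ d, f m ∈ 𝒩 d)
    -- the ideal 𝔪
    (𝔪 : Ideal R)
    (h𝔪 : 𝔪 = Ideal.span
      ((Subtype.val '' ((IsLocalRing.maximalIdeal ↥(𝒜 0) : Ideal ↥(𝒜 0)) : Set ↥(𝒜 0))) ∪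
        {x : R | ∃ i : ℕ, 0 < i ∧ x ∈ 𝒜 i}))
    -- surjectivity of the induced map `M/𝔪M → N/𝔪N`
    (hsurj : ∀ n : N, ∃ m : M, n - f m ∈ (𝔪 • (⊤ : Submodule R N))) :
    Function.Surjective f := by
  classical
  -- the main claim, by strong induction on the degree
  have key : ∀ d : ℕ, ∀ n ∈ 𝒩 d, n ∈ LinearMap.range f := by
    intro d
    induction d using Nat.strong_induction_on with
    | _ d IH =>
      -- the degree-zero subring acting on the degree-d piece of N
      letI : SMul ↥(𝒜 0) ↥(𝒩 d) :=
        ⟨fun a n => ⟨(a : R) • (n : N), by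
          have := h𝒩 0 d a n a.2 n.2; rwa [zero_add] at this⟩⟩
      have smul_val : ∀ (a : ↥(𝒜 0)) (n : ↥(𝒩 d)),
          ((a • n : ↥(𝒩 d)) : N) = (a : R) • (n : N) := fun _ _ => rfl
      letI : Module ↥(𝒜 0) ↥(𝒩 d) :=
        { one_smul := fun n => Subtype.ext (by rw [smul_val]; simp)
          mul_smul := fun a b n => Subtype.ext (by
            simp only [smul_val]
            push_cast
            rw [mul_smul])
          smul_zero := fun a => Subtype.ext (by rw [smul_val]; simp)
          smul_add := fun a n m => Subtype.ext (by
            simp only [AddSubgroup.coe_add, smul_val, AddSubgroup.coe_add, smul_add])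
          add_smul := fun a b n => Subtype.ext (by
            simp only [AddSubgroup.coe_add, smul_val]
            push_cast
            rw [add_smul])
          zero_smul := fun n => Subtype.ext (by rw [smul_val]; simp) }
      -- the projection onto the degree-d piece
      let projS : N →+ ↥(𝒩 d) :=
        { toFun := fun y => DirectSum.decompose 𝒩 y d
          map_zero' := by simp
          map_add' := by intro a b; simp [DirectSum.decompose_add] }
      have projS_val : ∀ y : N, (projS y : N) = (DirectSum.decompose 𝒩 y d : N) := fun _ => rfl
      have projS_same : ∀ y : N, y ∈ 𝒩 d → (projS y : N) = y := by
        intro y hy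
        rw [projS_val, DirectSum.decompose_of_mem_same 𝒩 hy]
      have projS_ne : ∀ (j : ℕ) (y : N), y ∈ 𝒩 j → j ≠ d → projS y = 0 := by
        intro j y hy hj
        exact Subtype.ext (by
          rw [projS_val, DirectSum.decompose_of_mem_ne 𝒩 hy hj]
          simp)
      -- the image of `f` inside the degree-d piece, as a `𝒜 0`-submodule
      let P : Submodule ↥(𝒜 0) ↥(𝒩 d) :=
        { carrier := {n : ↥(𝒩 d) | (n : N) ∈ LinearMap.range f}
          add_mem' := fun {a b} ha hb => by
            show ((a + b : ↥(𝒩 d)) : N) ∈ LinearMap.range f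
            rw [AddSubgroup.coe_add]
            exact Submodule.add_mem _ ha hb
          zero_mem' := ⟨0, by simp⟩
          smul_mem' := fun a n hn => by
            show ((a • n : ↥(𝒩 d)) : N) ∈ LinearMap.range f
            rw [smul_val]
            exact Submodule.smul_mem _ _ hn }
      have memP : ∀ (n : ↥(𝒩 d)), (n : N) ∈ LinearMap.range f → n ∈ P := fun _ h => h
      set m₀ := IsLocalRing.maximalIdeal ↥(𝒜 0) with hm₀
      -- the key claim: the degree-d projection of anything in 𝔪 • ⊤ lands in P ⊔ m₀ • ⊤
      have claim : ∀ z ∈ (𝔪 • (⊤ : Submodule R N)),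
          projS z ∈ P ⊔ m₀ • (⊤ : Submodule ↥(𝒜 0) ↥(𝒩 d)) := by
        intro z hz
        refine Submodule.smul_induction_on hz ?_ ?_
        · intro r hr y hy
          rw [h𝔪] at hr
          induction hr using Submodule.span_induction generalizing y with
          | mem x hx =>
            -- expand y into its homogeneous components
            have hy := DirectSum.sum_support_decompose 𝒩 y
            rw [← hy, Finset.smul_sum, map_sum]
            refine Submodule.sum_mem _ ?_
            intro j hj
            rcases hx with ⟨a, ha, rfl⟩ | ⟨i, hi, hxi⟩
            · -- x = a, a in the maximal ideal of 𝒜 0 (degree 0)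
              have hmem : (a : R) • (DirectSum.decompose 𝒩 y j : N) ∈ 𝒩 j := by
                have := h𝒩 0 j a _ a.2 (DirectSum.decompose 𝒩 y j).2
                rwa [zero_add] at this
              by_cases hjd : j = d
              · subst hjd
                have he : projS ((a : R) • (DirectSum.decompose 𝒩 y j : N)) =
                    a • (DirectSum.decompose 𝒩 y j) := by
                  refine Subtype.ext ?_
                  rw [projS_same _ hmem, smul_val]
                rw [he]
                exact Submodule.mem_sup_right
                  (Submodule.smul_mem_smul ha Submodule.mem_top)
              · rw [projS_ne j _ hmem hjd]
                exact zero_mem _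
            · -- x homogeneous of positive degree i
              have hmem : x • (DirectSum.decompose 𝒩 y j : N) ∈ 𝒩 (i + j) :=
                h𝒩 i j x _ hxi (DirectSum.decompose 𝒩 y j).2
              by_cases hjd : i + j = d
              · have hjlt : j < d := by omega
                obtain ⟨m', hm'⟩ := IH j hjlt _ (DirectSum.decompose 𝒩 y j).2
                have hrange : x • (DirectSum.decompose 𝒩 y j : N) ∈ LinearMap.range f :=
                  ⟨x • m', by rw [map_smul, hm']⟩
                refine Submodule.mem_sup_left (memP _ ?_)
                rw [projS_same _ (hjd ▸ hmem)]
                exact hrange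
              · rw [projS_ne (i + j) _ hmem hjd]
                exact zero_mem _
          | zero =>
            rw [zero_smul, map_zero]
            exact zero_mem _
          | add r₁ r₂ h₁ h₂ ih₁ ih₂ =>
            rw [add_smul, map_add]
            exact add_mem (ih₁ _ hy) (ih₂ _ hy)
          | smul r' r hr ih =>
            rw [smul_eq_mul, mul_comm r' r, mul_smul]
            exact ih _ Submodule.mem_top
        · intro x y hx hy
          rw [map_add]
          exact add_mem hx hy
      -- the top submodule is finitely generated over 𝒜 0
      obtain ⟨s, hs, hgen⟩ := hNfg d
      have hfg : (⊤ : Submodule ↥(𝒜 0) ↥(𝒩 d)).FG := by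
        refine ⟨s.subtype (· ∈ 𝒩 d), ?_⟩
        refine le_antisymm le_top ?_
        rintro ⟨n, hn⟩ -
        obtain ⟨c, hc, hsum⟩ := hgen n hn
        have hne : (⟨n, hn⟩ : ↥(𝒩 d)) =
            ∑ x ∈ s.attach, (⟨c x.1, hc x.1⟩ : ↥(𝒜 0)) • (⟨x.1, hs x.2⟩ : ↥(𝒩 d)) := by
          apply Subtype.ext
          rw [AddSubmonoidClass.coe_finset_sum]
          simp only [smul_val]
          rw [← Finset.sum_attach s (fun x => c x • x)] at hsum
          exact hsum
        rw [hne]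
        refine Submodule.sum_mem _ ?_
        intro x _
        refine Submodule.smul_mem _ _ (Submodule.subset_span ?_)
        rw [Finset.mem_coe, Finset.mem_subtype]
        exact x.2
      -- every element of the degree-d piece lies in P ⊔ m₀ • ⊤
      have hle : (⊤ : Submodule ↥(𝒜 0) ↥(𝒩 d)) ≤ P ⊔ m₀ • (⊤ : Submodule ↥(𝒜 0) ↥(𝒩 d)) := by
        rintro ⟨n, hn⟩ -
        obtain ⟨m, hz⟩ := hsurj n
        have h1 : (⟨n, hn⟩ : ↥(𝒩 d)) = projS (f m) + projS (n - f m) := by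
          rw [← map_add, add_sub_cancel]
          exact Subtype.ext (projS_same n hn).symm
        rw [h1]
        refine add_mem (Submodule.mem_sup_left (memP _ ?_)) (claim _ hz)
        -- projS (f m) lies in the range of f
        have hm : f m = ∑ j ∈ (DirectSum.decompose ℳ m).support,
            f (DirectSum.decompose ℳ m j : M) := by
          rw [← map_sum, DirectSum.sum_support_decompose ℳ m]
        rw [hm, map_sum, AddSubmonoidClass.coe_finset_sum]
        refine Submodule.sum_mem _ ?_
        intro j _
        have hfj : f (DirectSum.decompose ℳ m j : M) ∈ 𝒩 j := hf j _ (DirectSum.decompose ℳ m j).2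
        by_cases hjd : j = d
        · subst hjd
          rw [projS_same _ hfj]
          exact ⟨_, rfl⟩
        · rw [projS_ne j _ hfj hjd]
          simp
      -- Nakayama
      have hP : (⊤ : Submodule ↥(𝒜 0) ↥(𝒩 d)) ≤ P :=
        Submodule.le_of_le_smul_of_le_jacobson_bot hfg
          (IsLocalRing.maximalIdeal_le_jacobson ⊥) hle
      intro n hn
      exact hP (Submodule.mem_top : (⟨n, hn⟩ : ↥(𝒩 d)) ∈ ⊤)
  -- conclude surjectivity
  intro n
  have hmem : n ∈ LinearMap.range f := by
    rw [← DirectSum.sum_support_decompose 𝒩 n]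
    exact Submodule.sum_mem _ fun j _ => key j _ (DirectSum.decompose 𝒩 n j).2
  exact hmem
end

section
/- The ring ℤ[1/7][z₁,z₂,z₃]/(z₁z₂+z₂z₃+z₃z₁) is an integral domain and is integrally closed in its field of fractions, i.e., it is a normal domain. -/
set_option synthInstance.maxHeartbeats 1000000
set_option maxHeartbeats 2000000

open MvPolynomial

/-- The ring `ℤ[1/7]`, i.e. the localization of `ℤ` inverting `7`. -/
def ZZ7 : Type := Localization.Away (7 : ℤ)

noncomputable instance : CommRing ZZ7 :=
  inferInstanceAs (CommRing (Localization.Away (7 : ℤ)))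

/-- The ring `ℤ[1/7][z₁,z₂,z₃]/(z₁z₂+z₂z₃+z₃z₁)`. -/
noncomputable abbrev MF17 : Type :=
  MvPolynomial (Fin 3) ZZ7 ⧸
    (Ideal.span {(X 0 * X 1 + X 1 * X 2 + X 2 * X 0 : MvPolynomial (Fin 3) ZZ7)})

namespace MF17Aux

instance : IsDomain ZZ7 := by
  have : IsDomain (Localization.Away (7 : ℤ)) :=
    IsLocalization.isDomain_localization
      (le_nonZeroDivisors_of_noZeroDivisors (by
        intro h
        rcases h with ⟨n, hn⟩
        exact absurd hn (by positivity)))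
  exact this

instance : Algebra ℤ ZZ7 := inferInstanceAs (Algebra ℤ (Localization.Away (7 : ℤ)))

instance : IsLocalization.Away (7 : ℤ) ZZ7 :=
  inferInstanceAs (IsLocalization.Away (7 : ℤ) (Localization.Away (7 : ℤ)))

instance : IsPrincipalIdealRing ZZ7 := by
  constructor
  intro I
  have h := IsLocalization.map_comap (Submonoid.powers (7:ℤ)) ZZ7 I
  obtain ⟨g, hg⟩ := (IsPrincipalIdealRing.principal (I.comap (algebraMap ℤ ZZ7)))
  exact ⟨algebraMap ℤ ZZ7 g, by
    rw [← h, Ideal.under_def, hg]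
    simp [Ideal.map_span, Ideal.submodule_span_eq]⟩

lemma two_ne_zero' : (2 : ZZ7) ≠ 0 := by
  have hinj : Function.Injective (algebraMap ℤ ZZ7) :=
    IsLocalization.injective (M := Submonoid.powers (7:ℤ)) ZZ7
      (le_nonZeroDivisors_of_noZeroDivisors (by
        intro h
        rcases h with ⟨n, hn⟩
        exact absurd hn (by positivity)))
  intro h
  have h2 : algebraMap ℤ ZZ7 2 = algebraMap ℤ ZZ7 0 := by simpa using h
  exact absurd (hinj h2) (by norm_num)

noncomputable section

abbrev S2 := MvPolynomial (Fin 2) ZZ7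
abbrev P3 := MvPolynomial (Fin 3) ZZ7

abbrev qpoly : P3 := X 0 * X 1 + X 1 * X 2 + X 2 * X 0

/-- Negation of the two variables. -/
def nS : S2 →ₐ[ZZ7] S2 := aeval ![-X 0, -X 1]

/-- The map realizing `MF17` inside `ℤ[1/7][u,v]`:
`z₁ ↦ uv`, `z₂ ↦ u² - uv`, `z₃ ↦ v² - uv`. -/
def phi : P3 →ₐ[ZZ7] S2 := aeval ![X 0 * X 1, X 0^2 - X 0 * X 1, X 1^2 - X 0 * X 1]

def tau : P3 →ₐ[ZZ7] P3 := aeval ![X 0, X 1 - X 0, X 2 - X 0]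
def tau' : P3 →ₐ[ZZ7] P3 := aeval ![X 0, X 1 + X 0, X 2 + X 0]
def beta : P3 →ₐ[ZZ7] S2 := aeval ![X 0 * X 1, X 0^2, X 1^2]
def gam : S2 →ₐ[ZZ7] S2 := aeval ![X 0 ^ 2, X 1 ^ 2]

lemma nS_nS (p : S2) : nS (nS p) = p := by
  have : (nS.comp nS) = AlgHom.id ZZ7 S2 := by
    apply MvPolynomial.algHom_ext
    intro i
    fin_cases i <;> simp [nS]
  calc nS (nS p) = (nS.comp nS) p := rfl
    _ = p := by rw [this]; rfl

lemma phi_q : phi qpoly = 0 := by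
  simp [phi, qpoly]
  ring

lemma tau'_tau (p : P3) : tau' (tau p) = p := by
  have : (tau'.comp tau) = AlgHom.id ZZ7 P3 := by
    apply MvPolynomial.algHom_ext
    intro i
    fin_cases i <;> simp [tau, tau']
  calc tau' (tau p) = (tau'.comp tau) p := rfl
    _ = p := by rw [this]; rfl

lemma phi_eq (p : P3) : phi p = beta (tau p) := by
  have : (beta.comp tau) = phi := by
    apply MvPolynomial.algHom_ext
    intro i
    fin_cases i <;> simp [tau, beta, phi] <;> ring
  rw [← this]; rfl

/-! ### Coefficient lemmas for `gam` -/

lemma monomial_eq_prod (m : Fin 2 →₀ ℕ) (c : ZZ7) :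
    monomial m c = C c * ∏ i : Fin 2, (X i : S2) ^ m i := by
  rw [monomial_eq]
  congr 1
  rw [Finsupp.prod_fintype]
  intro i; simp

lemma gam_monomial (m : Fin 2 →₀ ℕ) (c : ZZ7) :
    gam (monomial m c) = monomial (2 • m) c := by
  rw [monomial_eq_prod, monomial_eq_prod]
  simp only [map_mul, map_prod, map_pow, algHom_C, gam]
  congr 1
  apply Finset.prod_congr rfl
  intro i _
  fin_cases i <;> simp [pow_mul] <;> ring

lemma coeff_gam (p : S2) (d : Fin 2 →₀ ℕ) : coeff (2 • d) (gam p) = coeff d p := by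
  induction p using MvPolynomial.induction_on' with
  | monomial m c =>
    rw [gam_monomial, coeff_monomial, coeff_monomial]
    by_cases h : m = d
    · simp [h]
    · rw [if_neg (fun hc => h (by
        ext i
        have := DFunLike.congr_fun hc i
        simp [two_mul] at this ⊢
        omega)), if_neg h]
  | add f g hf hg => simp [map_add, hf, hg]

lemma coeff_gam_mul (p : S2) (d : Fin 2 →₀ ℕ) :
    coeff (2 • d) (gam p * (X 0 * X 1)) = 0 := by
  induction p using MvPolynomial.induction_on' with
  | monomial m c =>
    have hX : (X 0 * X 1 : S2) = monomial (Finsupp.single 0 1 + Finsupp.single 1 1) 1 := by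
      rw [X, X, monomial_mul, one_mul]
    have hne : 2 • m + (Finsupp.single 0 1 + Finsupp.single 1 1) ≠ 2 • d := by
      intro hc
      have := DFunLike.congr_fun hc 0
      simp [Finsupp.single_apply, two_mul] at this
      omega
    rw [gam_monomial, hX, monomial_mul, coeff_monomial, if_neg hne]
  | add f g hf hg => simp [map_add, add_mul, hf, hg]

lemma gam_inj : Function.Injective gam := by
  intro a b h
  ext d
  rw [← coeff_gam a d, ← coeff_gam b d, h]

lemma key_inj (a b : S2) (h : gam a + gam b * (X 0 * X 1) = 0) : a = 0 ∧ b = 0 := by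
  have ha : a = 0 := by
    ext d
    have := congrArg (coeff (2 • d)) h
    rw [coeff_add, coeff_gam, coeff_gam_mul, add_zero] at this
    simpa using this
  subst ha
  simp only [map_zero, zero_add] at h
  have hX : (X 0 * X 1 : S2) ≠ 0 := by
    apply mul_ne_zero <;> exact MvPolynomial.X_ne_zero _
  have hb : gam b = 0 := by
    rcases mul_eq_zero.mp h with h' | h'
    · exact h'
    · exact absurd h' hX
  refine ⟨rfl, gam_inj (by simpa using hb)⟩

/-! ### Kernel of `beta` -/

def e3 : P3 ≃ₐ[ZZ7] Polynomial S2 := MvPolynomial.finSuccEquiv ZZ7 2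

def Bt : Polynomial S2 →+* S2 := Polynomial.eval₂RingHom gam.toRingHom (X 0 * X 1)

lemma Bt_e3 (p : P3) : Bt (e3 p) = beta p := by
  have : Bt.comp (e3 : P3 →+* Polynomial S2) = (beta : P3 →+* S2) := by
    apply MvPolynomial.ringHom_ext
    · intro c
      simp [Bt, e3, beta, MvPolynomial.finSuccEquiv_apply, eval₂_C]
    · intro i
      fin_cases i
      · simp [Bt, e3, beta, finSuccEquiv_X_zero]
      · show Bt (e3 (X 1)) = beta (X 1)
        have h1 : (X 1 : P3) = X (Fin.succ 0) := rfl
        rw [h1]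
        simp only [e3, finSuccEquiv_X_succ]
        simp [Bt, beta, gam]
      · show Bt (e3 (X 2)) = beta (X 2)
        have h1 : (X 2 : P3) = X (Fin.succ 1) := rfl
        rw [h1]
        simp only [e3, finSuccEquiv_X_succ]
        simp [Bt, beta, gam]
  exact congrFun (congrArg DFunLike.coe this) p

def gq : Polynomial S2 := Polynomial.X ^ 2 - Polynomial.C (X 0 * X 1 : S2)

lemma gq_monic : gq.Monic := Polynomial.monic_X_pow_sub_C _ two_ne_zero

lemma e3_q : e3 (X 1 * X 2 - X 0 ^ 2 : P3) = -gq := by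
  have h1 : (X 1 : P3) = X (Fin.succ 0) := rfl
  have h2 : (X 2 : P3) = X (Fin.succ 1) := rfl
  rw [map_sub, map_mul, map_pow, h1, h2]
  simp only [e3, finSuccEquiv_X_succ, finSuccEquiv_X_zero]
  rw [gq, ← Polynomial.C_mul]
  ring

lemma Bt_gq : Bt gq = 0 := by
  simp [Bt, gq, gam]
  ring

lemma ker_beta {p : P3} (hp : beta p = 0) :
    p ∈ Ideal.span {(X 1 * X 2 - X 0 ^ 2 : P3)} := by
  set P := e3 p with hP
  have hdiv : P %ₘ gq + gq * (P /ₘ gq) = P := Polynomial.modByMonic_add_div P gq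
  set r := P %ₘ gq with hrdef
  have hdeg : r.degree < 2 := by
    have h := Polynomial.degree_modByMonic_lt P gq_monic
    have : gq.degree = 2 := by
      rw [gq]
      exact Polynomial.degree_X_pow_sub_C (by norm_num) _
    rwa [this] at h
  have hdeg1 : r.degree ≤ 1 := by
    rw [Polynomial.degree_le_iff_coeff_zero]
    intro m hm
    apply Polynomial.coeff_eq_zero_of_degree_lt
    refine lt_of_lt_of_le hdeg ?_
    have hm' : 1 < m := by exact_mod_cast hm
    exact_mod_cast Nat.succ_le_of_lt hm'
  have hr : r = Polynomial.C (r.coeff 1) * Polynomial.X + Polynomial.C (r.coeff 0) :=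
    Polynomial.eq_X_add_C_of_degree_le_one hdeg1
  have h0 : Bt P = 0 := by rw [hP, Bt_e3, hp]
  have hBr : Bt r = 0 := by
    have := congrArg Bt hdiv
    rw [map_add, map_mul, Bt_gq, zero_mul, add_zero] at this
    rw [this, h0]
  have hab : gam (r.coeff 0) + gam (r.coeff 1) * (X 0 * X 1) = 0 := by
    have : Bt r = gam (r.coeff 1) * (X 0 * X 1) + gam (r.coeff 0) := by
      conv_lhs => rw [hr]
      simp [Bt]
    rw [this] at hBr
    rw [← hBr]; ring
  obtain ⟨ha, hb⟩ := key_inj _ _ hab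
  have hr0 : r = 0 := by rw [hr, ha, hb]; simp
  rw [Ideal.mem_span_singleton]
  have hPgq : gq * (P /ₘ gq) = P := by conv_rhs => rw [← hdiv, hr0, zero_add]
  have hsymm : e3.symm gq = -(X 1 * X 2 - X 0 ^ 2 : P3) := by
    have h := congrArg e3.symm e3_q
    rw [AlgEquiv.symm_apply_apply, map_neg] at h
    rw [h, neg_neg]
  refine ⟨-(e3.symm (P /ₘ gq)), ?_⟩
  calc p = e3.symm (gq * (P /ₘ gq)) := by rw [hPgq, hP, AlgEquiv.symm_apply_apply]
    _ = e3.symm gq * e3.symm (P /ₘ gq) := map_mul _ _ _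
    _ = (X 1 * X 2 - X 0 ^ 2 : P3) * -(e3.symm (P /ₘ gq)) := by rw [hsymm]; ring

/-! ### Fixed points of `nS` are the range of `phi` -/

lemma nS_monomial (m : Fin 2 →₀ ℕ) (c : ZZ7) :
    nS (monomial m c) = (-1 : ZZ7) ^ (m 0 + m 1) • monomial m c := by
  rw [monomial_eq_prod]
  simp only [Fin.prod_univ_two]
  rw [map_mul, map_mul, map_pow, map_pow, algHom_C]
  simp only [nS, aeval_X, Matrix.cons_val_zero, Matrix.cons_val_one, Matrix.head_cons]
  rw [smul_eq_C_mul, neg_pow, neg_pow]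
  rw [MvPolynomial.algebraMap_eq]
  simp only [map_mul, map_pow, map_neg, map_one]
  ring

lemma coeff_nS (p : S2) (d : Fin 2 →₀ ℕ) :
    coeff d (nS p) = (-1 : ZZ7) ^ (d 0 + d 1) * coeff d p := by
  induction p using MvPolynomial.induction_on' with
  | monomial m c =>
    rw [nS_monomial, smul_eq_C_mul, coeff_C_mul, coeff_monomial]
    by_cases h : m = d
    · subst h; rfl
    · simp [h]
  | add f g hf hg => simp [map_add, hf, hg, mul_add]

lemma even_of_fixed {p : S2} (hp : nS p = p) {m : Fin 2 →₀ ℕ} (hm : m ∈ p.support) :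
    Even (m 0 + m 1) := by
  by_contra hodd
  have h := coeff_nS p m
  rw [hp] at h
  rw [Odd.neg_one_pow (Nat.not_even_iff_odd.mp hodd)] at h
  have : (2 : ZZ7) * coeff m p = 0 := by linear_combination h
  rcases mul_eq_zero.mp this with h' | h'
  · exact two_ne_zero' h'
  · exact (mem_support_iff.mp hm) h'

lemma sq_mem_range : ∀ i : Fin 2, (X i : S2) ^ 2 ∈ phi.range := by
  intro i
  fin_cases i
  · exact ⟨X 0 + X 1, by simp [phi]⟩
  · exact ⟨X 0 + X 2, by simp [phi]⟩

lemma mul_mem_range : (X 0 * X 1 : S2) ∈ phi.range := ⟨X 0, by simp [phi]⟩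

lemma monomial_mem_range {m : Fin 2 →₀ ℕ} (hm : Even (m 0 + m 1)) (c : ZZ7) :
    monomial m c ∈ phi.range := by
  have hC : (C c : S2) ∈ phi.range := ⟨C c, by simp [phi]⟩
  rw [monomial_eq_prod, Fin.prod_univ_two]
  rcases Nat.even_or_odd (m 0) with ⟨k, hk⟩ | ⟨k, hk⟩
  · have hodd : Even (m 1) := by
      rcases hm with ⟨l, hl⟩; exact ⟨l - k, by omega⟩
    rcases hodd with ⟨l, hl⟩
    have : (X 0 : S2) ^ m 0 * X 1 ^ m 1 = ((X 0 :S2) ^ 2) ^ k * ((X 1 : S2) ^ 2) ^ l := by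
      rw [hk, hl, ← pow_mul, ← pow_mul]; ring_nf
    rw [this]
    exact Subalgebra.mul_mem _ hC (Subalgebra.mul_mem _
      (Subalgebra.pow_mem _ (sq_mem_range 0) k) (Subalgebra.pow_mem _ (sq_mem_range 1) l))
  · have hodd : Odd (m 1) := by
      rcases hm with ⟨l, hl⟩; exact ⟨l - k - 1, by omega⟩
    rcases hodd with ⟨l, hl⟩
    have : (X 0 : S2) ^ m 0 * X 1 ^ m 1
        = (X 0 * X 1 : S2) * (((X 0 : S2) ^ 2) ^ k * ((X 1 : S2) ^ 2) ^ l) := by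
      rw [hk, hl, ← pow_mul, ← pow_mul, pow_add, pow_add, pow_mul, pow_mul]; ring
    rw [this]
    exact Subalgebra.mul_mem _ hC (Subalgebra.mul_mem _ mul_mem_range
      (Subalgebra.mul_mem _
        (Subalgebra.pow_mem _ (sq_mem_range 0) k) (Subalgebra.pow_mem _ (sq_mem_range 1) l)))

lemma fixed_mem_range {p : S2} (hp : nS p = p) : p ∈ phi.range := by
  rw [← MvPolynomial.support_sum_monomial_coeff p]
  apply Subalgebra.sum_mem
  intro m hm
  exact monomial_mem_range (even_of_fixed hp hm) _

lemma range_fixed (p : P3) : nS (phi p) = phi p := by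
  have : nS.comp phi = phi := by
    apply MvPolynomial.algHom_ext
    intro i
    fin_cases i <;> simp [nS, phi]
  exact congrFun (congrArg DFunLike.coe this) p

/-! ### Assembly -/

lemma ker_phi {p : P3} (hp : phi p = 0) : p ∈ Ideal.span {qpoly} := by
  rw [phi_eq] at hp
  obtain ⟨r, hr⟩ := Ideal.mem_span_singleton.mp (ker_beta hp)
  rw [Ideal.mem_span_singleton]
  refine ⟨tau' r, ?_⟩
  have h1 : p = tau' (tau p) := (tau'_tau p).symm
  rw [h1, hr, map_mul]
  congr 1
  show tau' (X 1 * X 2 - X 0 ^ 2) = qpoly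
  simp [tau', qpoly]
  ring

def psi : MF17 →+* S2 :=
  Ideal.Quotient.lift (Ideal.span {qpoly}) (phi : P3 →+* S2) (by
    have hle : Ideal.span {qpoly} ≤ RingHom.ker (phi : P3 →+* S2) := by
      rw [Ideal.span_le, Set.singleton_subset_iff]
      exact phi_q
    exact fun a ha => hle ha)

lemma psi_mk (p : P3) : psi (Ideal.Quotient.mk _ p) = phi p := rfl

lemma psi_inj : Function.Injective psi := by
  rw [injective_iff_map_eq_zero]
  intro x hx
  obtain ⟨p, rfl⟩ := Ideal.Quotient.mk_surjective x
  rw [psi_mk] at hx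
  rw [Ideal.Quotient.eq_zero_iff_mem]
  exact ker_phi hx

instance MF17_instDomain : IsDomain MF17 := Function.Injective.isDomain psi psi_inj

theorem MF17_main : IsDomain MF17 ∧ IsIntegrallyClosed MF17 := by
  refine ⟨inferInstance, ?_⟩
  set L := FractionRing S2 with hL
  let j : MF17 →+* L := (algebraMap S2 L).comp psi
  have hj : Function.Injective j := (IsFractionRing.injective S2 L).comp psi_inj
  let g : FractionRing MF17 →+* L := IsFractionRing.lift hj
  have hg : Function.Injective g := g.injective
  have hnSinj : Function.Injective (nS : S2 →+* S2) :=
    Function.LeftInverse.injective nS_nS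
  let nL : L →+* L := IsFractionRing.lift (g := (algebraMap S2 L).comp (nS : S2 →+* S2))
    ((IsFractionRing.injective S2 L).comp hnSinj)
  have hnL : ∀ s : S2, nL (algebraMap S2 L s) = algebraMap S2 L (nS s) :=
    fun s => IsFractionRing.lift_algebraMap _ s
  have hfix : nL.comp g = g := by
    refine IsLocalization.ringHom_ext (nonZeroDivisors MF17) (RingHom.ext fun x => ?_)
    have h1 : g (algebraMap MF17 (FractionRing MF17) x) = j x := IsFractionRing.lift_algebraMap _ _
    simp only [RingHom.comp_apply]
    rw [h1]
    obtain ⟨p, rfl⟩ := Ideal.Quotient.mk_surjective x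
    show nL (algebraMap S2 L (phi p)) = algebraMap S2 L (phi p)
    rw [hnL, range_fixed]
  rw [isIntegrallyClosed_iff (FractionRing MF17)]
  intro x hx
  obtain ⟨p, pmonic, hp⟩ := hx
  have hint : IsIntegral S2 (g x) := by
    refine ⟨p.map psi, pmonic.map psi, ?_⟩
    show Polynomial.eval₂ (algebraMap S2 L) (g x) (p.map psi) = 0
    rw [Polynomial.eval₂_map]
    have hcomp : (algebraMap S2 L).comp psi = g.comp (algebraMap MF17 (FractionRing MF17)) := by
      refine RingHom.ext fun y => ?_
      simp only [RingHom.comp_apply]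
      rw [IsFractionRing.lift_algebraMap]
      rfl
    rw [hcomp, ← Polynomial.hom_eval₂, hp, map_zero]
  obtain ⟨s, hs⟩ := IsIntegrallyClosed.isIntegral_iff.mp hint
  have hsfix : nS s = s := by
    apply IsFractionRing.injective S2 L
    rw [← hnL, hs]
    show (nL.comp g) x = g x
    rw [hfix]
  obtain ⟨pp, hpp⟩ := fixed_mem_range hsfix
  refine ⟨Ideal.Quotient.mk _ pp, ?_⟩
  apply hg
  rw [IsFractionRing.lift_algebraMap]
  show algebraMap S2 L (phi pp) = g x
  rw [show phi pp = s from hpp, hs]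

end

end MF17Aux

/-- `ℤ[1/7][z₁,z₂,z₃]/(z₁z₂+z₂z₃+z₃z₁)` is a normal domain: it is an integral domain that
is integrally closed in its field of fractions. -/
theorem MF17_isDomain_and_integrallyClosed :
    IsDomain MF17 ∧ IsIntegrallyClosed MF17 := by
  exact MF17Aux.MF17_main
end

section
/- Let Ã, R, λ, σ₁ be as given. The assignment z₁ ↦ −z₃, z₂ ↦ −z₁, z₃ ↦ −z₂, r ↦ r + z₂z₃ determines a well-defined ℤ_(3)-algebra automorphism τ of R; τ has order 6 and fixes λ(ā₂), λ(ā₄) and λ(ā₆), so τ is an automorphism of R as an Ã-algebra. Moreover, the elements n₄ = σ₁²r − z₁³z₃ − z₁z₂³ − z₁²z₃² and n₆ = σ₁²r² − 2z₁³z₃r − 2z₁z₂³r − 2z₁²z₃²r + 2z₁³z₃³ − z₁²z₃⁴ of R are fixed by τ. -/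
open MvPolynomial

instance : (Ideal.span {(3 : ℤ)}).IsPrime :=
  (Ideal.span_singleton_prime (by norm_num)).mpr Int.prime_three

/-- The ring `ℤ_(3)`, the localization of `ℤ` at the prime ideal `(3)`. -/
def Z3loc : Type := Localization.AtPrime (Ideal.span {(3 : ℤ)})

noncomputable instance : CommRing Z3loc :=
  inferInstanceAs (CommRing (Localization.AtPrime (Ideal.span {(3 : ℤ)})))

/-- The polynomial ring `Ã = ℤ_(3)[ā₂,ā₄,ā₆]`. -/
noncomputable abbrev Atilde : Type := MvPolynomial (Fin 3) Z3loc

/-- The ring `R = ℤ_(3)[z₁,z₂,z₃,r]/(z₁z₂+z₂z₃+z₃z₁)`; the variables `X 0, X 1, X 2, X 3`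
are `z₁, z₂, z₃, r` respectively. -/
noncomputable abbrev Rring : Type :=
  MvPolynomial (Fin 4) Z3loc ⧸
    (Ideal.span {(X 0 * X 1 + X 1 * X 2 + X 2 * X 0 : MvPolynomial (Fin 4) Z3loc)})

/-- The images of the variables `z₁, z₂, z₃, r` in `R`. -/
noncomputable def zR (i : Fin 4) : Rring := Ideal.Quotient.mk _ (X i)

/-- `σ₁ = z₁+z₂+z₃` in `R`. -/
noncomputable def σ₁R : Rring := zR 0 + zR 1 + zR 2

/-- `σ₃ = z₁z₂z₃` in `R`. -/
noncomputable def σ₃R : Rring := zR 0 * zR 1 * zR 2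

/-- `λ(ā₂) = (1/4)(z₁−z₂+z₃)² − z₂z₃ − 3r`  (note `4` is a unit in `ℤ_(3)`). -/
noncomputable def la2 : Rring :=
  Ring.inverse (4 : Rring) * (zR 0 - zR 1 + zR 2) ^ 2 - zR 1 * zR 2 - 3 * zR 3

/-- `λ(ā₄) = (1/2)z₁z₃²(z₁−z₂+z₃) − 2r·λ(ā₂) − 3r²`. -/
noncomputable def la4 : Rring :=
  Ring.inverse (2 : Rring) * (zR 0 * zR 2 ^ 2 * (zR 0 - zR 1 + zR 2))
    - 2 * zR 3 * la2 - 3 * zR 3 ^ 2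

/-- `λ(ā₆) = (1/4)z₁²z₃⁴ − r·λ(ā₄) − r²·λ(ā₂) − r³`. -/
noncomputable def la6 : Rring :=
  Ring.inverse (4 : Rring) * (zR 0 ^ 2 * zR 2 ^ 4)
    - zR 3 * la4 - zR 3 ^ 2 * la2 - zR 3 ^ 3

/-- The `ℤ_(3)`-algebra map `λ : Ã → R`, `ā₂ ↦ λ(ā₂)`, `ā₄ ↦ λ(ā₄)`, `ā₆ ↦ λ(ā₆)`. -/
noncomputable def lam : Atilde →ₐ[Z3loc] Rring :=
  MvPolynomial.aeval ![la2, la4, la6]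

/-- `n₄ = σ₁²r − z₁³z₃ − z₁z₂³ − z₁²z₃²`. -/
noncomputable def n4R : Rring :=
  σ₁R ^ 2 * zR 3 - zR 0 ^ 3 * zR 2 - zR 0 * zR 1 ^ 3 - zR 0 ^ 2 * zR 2 ^ 2

/-- `n₆ = σ₁²r² − 2z₁³z₃r − 2z₁z₂³r − 2z₁²z₃²r + 2z₁³z₃³ − z₁²z₃⁴`. -/
noncomputable def n6R : Rring :=
  σ₁R ^ 2 * zR 3 ^ 2 - 2 * zR 0 ^ 3 * zR 2 * zR 3 - 2 * zR 0 * zR 1 ^ 3 * zR 3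
    - 2 * zR 0 ^ 2 * zR 2 ^ 2 * zR 3 + 2 * zR 0 ^ 3 * zR 2 ^ 3 - zR 0 ^ 2 * zR 2 ^ 4

/-! ### Auxiliary lemmas -/

instance : Nontrivial Z3loc :=
  inferInstanceAs (Nontrivial (Localization.AtPrime (Ideal.span {(3 : ℤ)})))

lemma isUnit_two_Z3loc : IsUnit (2 : Z3loc) := by
  have : IsUnit (algebraMap ℤ (Localization.AtPrime (Ideal.span {(3:ℤ)})) 2) :=
    IsLocalization.map_units _
      (⟨2, by simp [Ideal.primeCompl, Ideal.mem_span_singleton]⟩ :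
        (Ideal.span {(3:ℤ)}).primeCompl)
  have h2 : IsUnit ((2 : ℤ) : Localization.AtPrime (Ideal.span {(3:ℤ)})) := by
    simpa using this
  exact h2

lemma isUnit_two_Rring : IsUnit (2 : Rring) := by
  have := isUnit_two_Z3loc.map (algebraMap Z3loc Rring)
  rwa [map_ofNat] at this

lemma isUnit_four_Rring : IsUnit (4 : Rring) := by
  have h : (4 : Rring) = 2 * 2 := by norm_num
  rw [h]
  exact isUnit_two_Rring.mul isUnit_two_Rring

lemma hzero : zR 0 * zR 1 + zR 1 * zR 2 + zR 2 * zR 0 = 0 := by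
  simp only [zR, ← map_mul, ← map_add]
  exact Ideal.Quotient.eq_zero_iff_mem.mpr (Ideal.subset_span rfl)

/-- ext lemma for algebra homs out of `Rring`. -/
lemma Rring_algHom_ext {B : Type*} [Semiring B] [Algebra Z3loc B]
    {f g : Rring →ₐ[Z3loc] B} (h : ∀ i, f (zR i) = g (zR i)) : f = g := by
  have hcomp : f.comp (Ideal.Quotient.mkₐ Z3loc _) = g.comp (Ideal.Quotient.mkₐ Z3loc _) :=
    MvPolynomial.algHom_ext fun i => h i
  ext x
  obtain ⟨p, rfl⟩ := Ideal.Quotient.mk_surjective x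
  exact AlgHom.congr_fun hcomp p

lemma Rring_algEquiv_ext {f g : Rring ≃ₐ[Z3loc] Rring} (h : ∀ i, f (zR i) = g (zR i)) :
    f = g :=
  AlgEquiv.coe_algHom_injective (Rring_algHom_ext h)

/-- the substitution `z₁ ↦ −z₃, z₂ ↦ −z₁, z₃ ↦ −z₂, r ↦ r + z₂z₃` as a hom on `Rring`. -/
noncomputable def tauHom : Rring →ₐ[Z3loc] Rring :=
  Ideal.Quotient.liftₐ _ (aeval ![-zR 2, -zR 0, -zR 1, zR 3 + zR 1 * zR 2])
    (by
      intro a ha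
      obtain ⟨c, rfl⟩ := Ideal.mem_span_singleton'.mp ha
      rw [map_mul]
      have h : (aeval ![-zR 2, -zR 0, -zR 1, zR 3 + zR 1 * zR 2])
          (X 0 * X 1 + X 1 * X 2 + X 2 * X 0 : MvPolynomial (Fin 4) Z3loc) = 0 := by
        simp only [map_add, map_mul, aeval_X]
        show (![-zR 2, -zR 0, -zR 1, zR 3 + zR 1 * zR 2] 0) *
            (![-zR 2, -zR 0, -zR 1, zR 3 + zR 1 * zR 2] 1) + _ + _ = 0
        simp only [Matrix.cons_val_zero, Matrix.cons_val_one, Matrix.head_cons,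
          Matrix.cons_val_two, Matrix.tail_cons]
        linear_combination hzero
      rw [h, mul_zero])

/-- the inverse substitution. -/
noncomputable def tauInv : Rring →ₐ[Z3loc] Rring :=
  Ideal.Quotient.liftₐ _ (aeval ![-zR 1, -zR 2, -zR 0, zR 3 - zR 0 * zR 2])
    (by
      intro a ha
      obtain ⟨c, rfl⟩ := Ideal.mem_span_singleton'.mp ha
      rw [map_mul]
      have h : (aeval ![-zR 1, -zR 2, -zR 0, zR 3 - zR 0 * zR 2])
          (X 0 * X 1 + X 1 * X 2 + X 2 * X 0 : MvPolynomial (Fin 4) Z3loc) = 0 := by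
        simp only [map_add, map_mul, aeval_X]
        show (![-zR 1, -zR 2, -zR 0, zR 3 - zR 0 * zR 2] 0) *
            (![-zR 1, -zR 2, -zR 0, zR 3 - zR 0 * zR 2] 1) + _ + _ = 0
        simp only [Matrix.cons_val_zero, Matrix.cons_val_one, Matrix.head_cons,
          Matrix.cons_val_two, Matrix.tail_cons]
        linear_combination hzero
      rw [h, mul_zero])

lemma tauHom_zR (i : Fin 4) :
    tauHom (zR i) = ![-zR 2, -zR 0, -zR 1, zR 3 + zR 1 * zR 2] i := by
  show tauHom (Ideal.Quotient.mk _ (X i)) = _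
  rw [tauHom, Ideal.Quotient.liftₐ_apply]
  erw [Ideal.Quotient.lift_mk]
  simp

lemma tauInv_zR (i : Fin 4) :
    tauInv (zR i) = ![-zR 1, -zR 2, -zR 0, zR 3 - zR 0 * zR 2] i := by
  show tauInv (Ideal.Quotient.mk _ (X i)) = _
  rw [tauInv, Ideal.Quotient.liftₐ_apply]
  erw [Ideal.Quotient.lift_mk]
  simp

/-- τ as an algebra automorphism of `Rring`. -/
noncomputable def tauEquiv : Rring ≃ₐ[Z3loc] Rring :=
  AlgEquiv.ofAlgHom tauHom tauInv
    (by
      refine Rring_algHom_ext fun i => ?_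
      have e : ∀ j : Fin 4, (tauHom.comp tauInv) (zR j) = tauHom (tauInv (zR j)) :=
        fun j => rfl
      have e' : ∀ j : Fin 4, (AlgHom.id Z3loc Rring) (zR j) = zR j := fun j => rfl
      rw [e, e']
      fin_cases i
      · rw [show ((⟨0, by norm_num⟩ : Fin 4)) = (0 : Fin 4) from rfl,
          show tauInv (zR 0) = -zR 1 from tauInv_zR 0, map_neg,
          show tauHom (zR 1) = -zR 0 from tauHom_zR 1, neg_neg]
      · rw [show ((⟨1, by norm_num⟩ : Fin 4)) = (1 : Fin 4) from rfl,
          show tauInv (zR 1) = -zR 2 from tauInv_zR 1, map_neg,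
          show tauHom (zR 2) = -zR 1 from tauHom_zR 2, neg_neg]
      · rw [show ((⟨2, by norm_num⟩ : Fin 4)) = (2 : Fin 4) from rfl,
          show tauInv (zR 2) = -zR 0 from tauInv_zR 2, map_neg,
          show tauHom (zR 0) = -zR 2 from tauHom_zR 0, neg_neg]
      · rw [show ((⟨3, by norm_num⟩ : Fin 4)) = (3 : Fin 4) from rfl,
          show tauInv (zR 3) = zR 3 - zR 0 * zR 2 from tauInv_zR 3, map_sub, map_mul,
          show tauHom (zR 3) = zR 3 + zR 1 * zR 2 from tauHom_zR 3,
          show tauHom (zR 0) = -zR 2 from tauHom_zR 0,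
          show tauHom (zR 2) = -zR 1 from tauHom_zR 2]
        ring)
    (by
      refine Rring_algHom_ext fun i => ?_
      have e : ∀ j : Fin 4, (tauInv.comp tauHom) (zR j) = tauInv (tauHom (zR j)) :=
        fun j => rfl
      have e' : ∀ j : Fin 4, (AlgHom.id Z3loc Rring) (zR j) = zR j := fun j => rfl
      rw [e, e']
      fin_cases i
      · rw [show ((⟨0, by norm_num⟩ : Fin 4)) = (0 : Fin 4) from rfl,
          show tauHom (zR 0) = -zR 2 from tauHom_zR 0, map_neg,
          show tauInv (zR 2) = -zR 0 from tauInv_zR 2, neg_neg]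
      · rw [show ((⟨1, by norm_num⟩ : Fin 4)) = (1 : Fin 4) from rfl,
          show tauHom (zR 1) = -zR 0 from tauHom_zR 1, map_neg,
          show tauInv (zR 0) = -zR 1 from tauInv_zR 0, neg_neg]
      · rw [show ((⟨2, by norm_num⟩ : Fin 4)) = (2 : Fin 4) from rfl,
          show tauHom (zR 2) = -zR 1 from tauHom_zR 2, map_neg,
          show tauInv (zR 1) = -zR 2 from tauInv_zR 1, neg_neg]
      · rw [show ((⟨3, by norm_num⟩ : Fin 4)) = (3 : Fin 4) from rfl,
          show tauHom (zR 3) = zR 3 + zR 1 * zR 2 from tauHom_zR 3, map_add, map_mul,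
          show tauInv (zR 3) = zR 3 - zR 0 * zR 2 from tauInv_zR 3,
          show tauInv (zR 1) = -zR 2 from tauInv_zR 1,
          show tauInv (zR 2) = -zR 0 from tauInv_zR 2]
        ring)

lemma tauEquiv_z0 : tauEquiv (zR 0) = -zR 2 := by
  show tauHom (zR 0) = _; rw [tauHom_zR]; rfl
lemma tauEquiv_z1 : tauEquiv (zR 1) = -zR 0 := by
  show tauHom (zR 1) = _; rw [tauHom_zR]; rfl
lemma tauEquiv_z2 : tauEquiv (zR 2) = -zR 1 := by
  show tauHom (zR 2) = _; rw [tauHom_zR]; rfl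
lemma tauEquiv_z3 : tauEquiv (zR 3) = zR 3 + zR 1 * zR 2 := by
  show tauHom (zR 3) = _; rw [tauHom_zR]; rfl

/-- evaluation `z₁ ↦ 1, z₂ ↦ 0, z₃ ↦ 0, r ↦ 0`, used to distinguish elements of `Rring`. -/
noncomputable def evR : Rring →ₐ[Z3loc] Z3loc :=
  Ideal.Quotient.liftₐ _ (aeval ![1, 0, 0, 0])
    (by
      intro a ha
      obtain ⟨c, rfl⟩ := Ideal.mem_span_singleton'.mp ha
      rw [map_mul]
      have h : (aeval (![1, 0, 0, 0] : Fin 4 → Z3loc))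
          (X 0 * X 1 + X 1 * X 2 + X 2 * X 0 : MvPolynomial (Fin 4) Z3loc) = 0 := by
        simp
      rw [h, mul_zero])

lemma evR_zR (i : Fin 4) : evR (zR i) = ![1, 0, 0, 0] i := by
  show evR (Ideal.Quotient.mk _ (X i)) = _
  rw [evR, Ideal.Quotient.liftₐ_apply]
  erw [Ideal.Quotient.lift_mk]
  simp

lemma zR_one_ne_zero : zR 1 ≠ zR 0 := by
  intro h
  have h' := congrArg evR h
  rw [evR_zR, evR_zR] at h'
  simp at h'

lemma neg_zR_zero_ne : -zR 0 ≠ zR 0 := by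
  intro h
  have h' := congrArg evR h
  rw [map_neg, evR_zR] at h'
  simp only [Matrix.cons_val_zero] at h'
  have h2 : (2 : Z3loc) = 0 := by linear_combination -h'
  exact isUnit_two_Z3loc.ne_zero h2

set_option maxHeartbeats 2000000 in
/-- The assignment `z₁ ↦ −z₃, z₂ ↦ −z₁, z₃ ↦ −z₂, r ↦ r + z₂z₃` determines a unique
well-defined `ℤ_(3)`-algebra automorphism `τ` of `R`; any such `τ` has order `6`, fixes
`λ(ā₂)`, `λ(ā₄)`, `λ(ā₆)` (so it is an automorphism of `R` as an `Ã`-algebra), and fixes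
the elements `n₄` and `n₆`. -/
theorem tau_exists_unique_and_properties :
    (∃! τ : Rring ≃ₐ[Z3loc] Rring,
      τ (zR 0) = -zR 2 ∧ τ (zR 1) = -zR 0 ∧ τ (zR 2) = -zR 1 ∧
        τ (zR 3) = zR 3 + zR 1 * zR 2) ∧
    (∀ τ : Rring ≃ₐ[Z3loc] Rring,
      τ (zR 0) = -zR 2 → τ (zR 1) = -zR 0 → τ (zR 2) = -zR 1 →
        τ (zR 3) = zR 3 + zR 1 * zR 2 →
      orderOf τ = 6 ∧ τ la2 = la2 ∧ τ la4 = la4 ∧ τ la6 = la6 ∧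
        τ n4R = n4R ∧ τ n6R = n6R) := by
  have hu2 : (2 : Rring) * Ring.inverse 2 = 1 := Ring.mul_inverse_cancel _ isUnit_two_Rring
  have hu4 : (4 : Rring) * Ring.inverse 4 = 1 := Ring.mul_inverse_cancel _ isUnit_four_Rring
  constructor
  · refine ⟨tauEquiv, ⟨tauEquiv_z0, tauEquiv_z1, tauEquiv_z2, tauEquiv_z3⟩, ?_⟩
    rintro τ ⟨h0, h1, h2, h3⟩
    refine Rring_algEquiv_ext fun i => ?_
    fin_cases i
    · rw [show ((⟨0, by norm_num⟩ : Fin 4)) = (0 : Fin 4) from rfl, h0, tauEquiv_z0]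
    · rw [show ((⟨1, by norm_num⟩ : Fin 4)) = (1 : Fin 4) from rfl, h1, tauEquiv_z1]
    · rw [show ((⟨2, by norm_num⟩ : Fin 4)) = (2 : Fin 4) from rfl, h2, tauEquiv_z2]
    · rw [show ((⟨3, by norm_num⟩ : Fin 4)) = (3 : Fin 4) from rfl, h3, tauEquiv_z3]
  · intro τ h0 h1 h2 h3
    have hti2 : τ (Ring.inverse (2 : Rring)) = Ring.inverse 2 := by
      have h' := congrArg τ hu2
      rw [map_mul, map_ofNat, map_one] at h'
      linear_combination (Ring.inverse (2 : Rring)) * h' - (τ (Ring.inverse (2 : Rring))) * hu2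
    have hti4 : τ (Ring.inverse (4 : Rring)) = Ring.inverse 4 := by
      have h' := congrArg τ hu4
      rw [map_mul, map_ofNat, map_one] at h'
      linear_combination (Ring.inverse (4 : Rring)) * h' - (τ (Ring.inverse (4 : Rring))) * hu4
    have cancel2 : ∀ x y : Rring, 2 * x = 2 * y → x = y := fun x y h => by
      linear_combination (Ring.inverse (2 : Rring)) * h + (y - x) * hu2
    have cancel4 : ∀ x y : Rring, 4 * x = 4 * y → x = y := fun x y h => by
      linear_combination (Ring.inverse (4 : Rring)) * h + (y - x) * hu4
    have hla2 : τ la2 = la2 := by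
      simp only [la2, map_sub, map_add, map_mul, map_pow, map_ofNat, h0, h1, h2, h3, hti4]
      linear_combination (((-1) * 1 : Rring)) * hzero +
        (((-1) * zR 0 * zR 2 + (1) * zR 1 * zR 2 : Rring)) * hu4
    have hla4 : τ la4 = la4 := by
      apply cancel2
      rw [show (2 : Rring) * τ la4 = τ (2 * la4) by rw [map_mul, map_ofNat]]
      simp only [la4, la2, map_sub, map_add, map_mul, map_pow, map_ofNat, h0, h1, h2, h3,
        hti2, hti4]
      linear_combination (((-1) * zR 0 * zR 2 + (5) * zR 1 * zR 2 + (-1) * zR 2 ^ 2 +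
          (4) * zR 3 : Rring)) * hzero +
        (((-1) * zR 0 ^ 2 * zR 2 ^ 2 + (-1) * zR 0 * zR 1 ^ 2 * zR 2 +
          (1) * zR 0 * zR 1 * zR 2 ^ 2 + (-1) * zR 0 * zR 2 ^ 3 + (1) * zR 1 ^ 3 * zR 2 +
          (1) * zR 1 ^ 2 * zR 2 ^ 2 : Rring)) * hu2 +
        (((-1) * zR 0 ^ 2 * zR 1 * zR 2 + (2) * zR 0 * zR 1 ^ 2 * zR 2 +
          (2) * zR 0 * zR 1 * zR 2 ^ 2 + (4) * zR 0 * zR 2 * zR 3 + (-1) * zR 1 ^ 3 * zR 2 +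
          (-2) * zR 1 ^ 2 * zR 2 ^ 2 + (-1) * zR 1 * zR 2 ^ 3 +
          (-4) * zR 1 * zR 2 * zR 3 : Rring)) * hu4
    have hla6 : τ la6 = la6 := by
      apply cancel4
      rw [show (4 : Rring) * τ la6 = τ (4 * la6) by rw [map_mul, map_ofNat]]
      simp only [la6, la4, la2, map_sub, map_add, map_mul, map_pow, map_ofNat, h0, h1, h2, h3,
        hti2, hti4]
      linear_combination (((1) * zR 0 * zR 1 * zR 2 ^ 2 + (-1) * zR 0 * zR 2 ^ 3 +
          (2) * zR 0 * zR 2 * zR 3 + (-4) * zR 1 ^ 2 * zR 2 ^ 2 + (1) * zR 1 * zR 2 ^ 3 +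
          (-10) * zR 1 * zR 2 * zR 3 + (2) * zR 2 ^ 2 * zR 3 + (-4) * zR 3 ^ 2 : Rring)) *
            hzero +
        (((2) * zR 0 ^ 2 * zR 2 ^ 2 * zR 3 + (2) * zR 0 * zR 1 ^ 3 * zR 2 ^ 2 +
          (2) * zR 0 * zR 1 ^ 2 * zR 2 * zR 3 + (-2) * zR 0 * zR 1 * zR 2 ^ 2 * zR 3 +
          (2) * zR 0 * zR 2 ^ 3 * zR 3 + (-2) * zR 1 ^ 4 * zR 2 ^ 2 +
          (-2) * zR 1 ^ 3 * zR 2 ^ 3 + (-2) * zR 1 ^ 3 * zR 2 * zR 3 +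
          (-2) * zR 1 ^ 2 * zR 2 ^ 2 * zR 3 : Rring)) * hu2 +
        (((1) * zR 0 ^ 2 * zR 1 ^ 2 * zR 2 ^ 2 + (2) * zR 0 ^ 2 * zR 1 * zR 2 * zR 3 +
          (-1) * zR 0 ^ 2 * zR 2 ^ 4 + (-2) * zR 0 * zR 1 ^ 3 * zR 2 ^ 2 +
          (-2) * zR 0 * zR 1 ^ 2 * zR 2 ^ 3 + (-4) * zR 0 * zR 1 ^ 2 * zR 2 * zR 3 +
          (-4) * zR 0 * zR 1 * zR 2 ^ 2 * zR 3 + (-4) * zR 0 * zR 2 * zR 3 ^ 2 +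
          (2) * zR 1 ^ 4 * zR 2 ^ 2 + (2) * zR 1 ^ 3 * zR 2 ^ 3 +
          (2) * zR 1 ^ 3 * zR 2 * zR 3 + (1) * zR 1 ^ 2 * zR 2 ^ 4 +
          (4) * zR 1 ^ 2 * zR 2 ^ 2 * zR 3 + (2) * zR 1 * zR 2 ^ 3 * zR 3 +
          (4) * zR 1 * zR 2 * zR 3 ^ 2 : Rring)) * hu4
    have hn4 : τ n4R = n4R := by
      simp only [n4R, σ₁R, map_sub, map_add, map_mul, map_pow, map_ofNat, h0, h1, h2, h3]
      linear_combination (((1) * zR 0 * zR 2 + (1) * zR 1 ^ 2 + (1) * zR 1 * zR 2 : Rring)) *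
        hzero
    have hn6 : τ n6R = n6R := by
      simp only [n6R, σ₁R, map_sub, map_add, map_mul, map_pow, map_ofNat, h0, h1, h2, h3]
      linear_combination (((-2) * zR 0 ^ 2 * zR 2 ^ 2 + (1) * zR 0 * zR 1 * zR 2 ^ 2 +
        (1) * zR 0 * zR 2 ^ 3 + (2) * zR 0 * zR 2 * zR 3 + (2) * zR 1 ^ 2 * zR 2 ^ 2 +
        (2) * zR 1 ^ 2 * zR 3 + (-1) * zR 1 * zR 2 ^ 3 +
        (2) * zR 1 * zR 2 * zR 3 : Rring)) * hzero
    have h6 : τ ^ 6 = 1 := by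
      refine Rring_algEquiv_ext fun i => ?_
      simp only [pow_succ, pow_zero, one_mul, AlgEquiv.mul_apply, AlgEquiv.one_apply]
      fin_cases i
      · rw [show ((⟨0, by norm_num⟩ : Fin 4)) = (0 : Fin 4) from rfl]
        simp only [h0, h1, h2, h3, map_neg, neg_neg]
      · rw [show ((⟨1, by norm_num⟩ : Fin 4)) = (1 : Fin 4) from rfl]
        simp only [h0, h1, h2, h3, map_neg, neg_neg]
      · rw [show ((⟨2, by norm_num⟩ : Fin 4)) = (2 : Fin 4) from rfl]
        simp only [h0, h1, h2, h3, map_neg, neg_neg]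
      · rw [show ((⟨3, by norm_num⟩ : Fin 4)) = (3 : Fin 4) from rfl]
        simp only [h0, h1, h2, h3, map_add, map_mul, map_neg, neg_neg, neg_mul, mul_neg]
        linear_combination (2 : Rring) * hzero
    have hsq : (τ ^ 2) (zR 0) = zR 1 := by
      rw [pow_two, AlgEquiv.mul_apply, h0, map_neg, h2, neg_neg]
    have hsq2 : (τ ^ 2) (zR 2) = zR 0 := by
      rw [pow_two, AlgEquiv.mul_apply, h2, map_neg, h1, neg_neg]
    have hcb : (τ ^ 3) (zR 0) = -zR 0 := by
      rw [pow_succ, AlgEquiv.mul_apply, h0, map_neg, hsq2]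
    have hne2 : τ ^ 2 ≠ 1 := fun h =>
      zR_one_ne_zero (by rw [← hsq, h, AlgEquiv.one_apply])
    have hne3 : τ ^ 3 ≠ 1 := fun h =>
      neg_zR_zero_ne (by rw [← hcb, h, AlgEquiv.one_apply])
    have hdvd : orderOf τ ∣ 6 := orderOf_dvd_of_pow_eq_one h6
    have hpos : 0 < orderOf τ := by
      have hfin : IsOfFinOrder τ := isOfFinOrder_iff_pow_eq_one.mpr ⟨6, by norm_num, h6⟩
      exact hfin.orderOf_pos
    have hord : orderOf τ = 6 := by
      have hle : orderOf τ ≤ 6 := Nat.le_of_dvd (by norm_num) hdvd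
      have hpow := pow_orderOf_eq_one τ
      interval_cases h : orderOf τ
      · exact absurd (by rw [pow_one] at hpow; rw [pow_two, hpow, mul_one]) hne2
      · exact absurd hpow hne2
      · exact absurd hpow hne3
      · norm_num at hdvd
      · norm_num at hdvd
      · rfl
    exact ⟨hord, hla2, hla4, hla6, hn4, hn6⟩
end
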